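/- Let n ≥ 2, α ∈ (0,1), and define the Poisson kernel of the half space by P(y', s) = Γ(n/2) π^{−n/2} s (|y'|² + s²)^{−n/2} for y' ∈ ℝⁿ⁻¹ and s > 0. There exists a constant C > 0 depending only on n and α such that for every bounded continuous g : ℝⁿ⁻¹ → ℝ with finite Hölder seminorm [g]^{(α)} = sup{ |g(x')−g(y')|/|x'−y'|^α : x' ≠ y' } < ∞, every s > 0 and every j ∈ {1, …, n−1}, the function u(x') = ∫_{ℝⁿ⁻¹} P(x'−y', s) g(y') dy' has a partial derivative ∂u/∂xⱼ at every x' ∈ ℝⁿ⁻¹, and |∂u/∂xⱼ(x')| ≤ C s^{α−1} [g]^{(α)}. -/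

import Mathlib

open MeasureTheory Set Metric Filter Module Topology

noncomputable section

abbrev En (n : ℕ) := EuclideanSpace ℝ (Fin n)

/-- the `i`-th standard basis vector of `ℝⁿ`. -/
def eb (n : ℕ) (i : Fin n) : En n := EuclideanSpace.single i 1

/-- the Laplacian `Δf`, computed as the sum of the second derivatives in the
coordinate directions. -/
def vlap {n : ℕ} {F : Type*} [NormedAddCommGroup F] [NormedSpace ℝ F]
    (f : En n → F) (x : En n) : F :=
  ∑ i, fderiv ℝ (fun y => fderiv ℝ f y (eb n i)) x (eb n i)

/-- the divergence `div v = Σⱼ ∂vʲ/∂xⱼ` of a vector field. -/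
def vdiv {n : ℕ} (v : En n → En n) (x : En n) : ℝ :=
  ∑ i, fderiv ℝ v x (eb n i) i

/-- the index of the last coordinate of `ℝⁿ`. -/
def lastIdx (n : ℕ) (hn : 2 ≤ n) : Fin n := ⟨n - 1, by omega⟩

/-- the last coordinate `xₙ` of a point of `ℝⁿ`. -/
def xlast (n : ℕ) (hn : 2 ≤ n) (x : En n) : ℝ := x (lastIdx n hn)

/-- the open upper half space `ℝⁿ₊ = {x : xₙ > 0}`. -/
def openHalf (n : ℕ) (hn : 2 ≤ n) : Set (En n) := {x : En n | 0 < xlast n hn x}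

/-- the closed upper half space `{x : xₙ ≥ 0}`. -/
def closedHalf (n : ℕ) (hn : 2 ≤ n) : Set (En n) := {x : En n | 0 ≤ xlast n hn x}

/-- the Poisson kernel of the half space,
`P(y', s) = Γ(n/2) π^{−n/2} s (|y'|² + s²)^{−n/2}`. -/
def poissonK (n : ℕ) (y : En (n - 1)) (s : ℝ) : ℝ :=
  Real.Gamma ((n : ℝ) / 2) * Real.pi ^ (-(n : ℝ) / 2) * s *
    (‖y‖ ^ 2 + s ^ 2) ^ (-(n : ℝ) / 2)

/-- coordinates are dominated by the norm. -/
lemma abs_coord_le_norm {m : ℕ} (v : En m) (j : Fin m) : |v j| ≤ ‖v‖ := by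
  rw [EuclideanSpace.norm_eq]
  have h1 : |v j| ^ 2 ≤ ∑ i, ‖v i‖ ^ 2 := by
    have := Finset.single_le_sum (f := fun i => ‖v i‖ ^ 2)
      (fun i _ => sq_nonneg _) (Finset.mem_univ j)
    simpa [Real.norm_eq_abs, sq_abs] using this
  have h2 := Real.sqrt_le_sqrt h1
  rwa [Real.sqrt_sq (abs_nonneg _)] at h2

/-- basic integrability lemma for inverse power weights. -/
lemma integrable_aux {m : ℕ} (a cc β : ℝ) (ha : 0 < a) (hc : 0 < cc)
    (hβ : (m : ℝ) < 2 * β) :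
    Integrable (fun y : En m => (a + cc * ‖y‖ ^ 2) ^ (-β)) := by
  have hm0 : (0:ℝ) ≤ (m:ℝ) := Nat.cast_nonneg m
  have hβ0 : 0 < β := by linarith
  set κ : ℝ := min a cc / 2 with hκdef
  have hκ : 0 < κ := by
    have := lt_min ha hc
    rw [hκdef]; linarith
  have hint : Integrable (fun y : En m => κ ^ (-β) * (1 + ‖y‖) ^ (-(2 * β))) := by
    apply Integrable.const_mul
    apply integrable_one_add_norm
    rwa [finrank_euclideanSpace_fin]
  refine hint.mono' ?_ (ae_of_all _ fun y => ?_)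
  · refine (Continuous.rpow_const ?_ fun y => Or.inl ?_).aestronglyMeasurable
    · have : Continuous fun y : En m => ‖y‖ ^ 2 := continuous_norm.pow 2
      exact continuous_const.add (continuous_const.mul this)
    · positivity
  · rw [Real.norm_eq_abs, abs_of_nonneg (Real.rpow_nonneg (by positivity) _)]
    have h1 : κ * (1 + ‖y‖) ^ 2 ≤ a + cc * ‖y‖ ^ 2 := by
      have h2 : min a cc ≤ a := min_le_left _ _
      have h3 : min a cc ≤ cc := min_le_right _ _
      have h4 : (0:ℝ) ≤ ‖y‖ := norm_nonneg y
      rw [hκdef]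
      nlinarith [sq_nonneg (1 - ‖y‖)]
    have h5 : (a + cc * ‖y‖ ^ 2) ^ (-β) ≤ (κ * (1 + ‖y‖) ^ 2) ^ (-β) :=
      Real.rpow_le_rpow_of_nonpos (by positivity) h1 (by linarith)
    calc (a + cc * ‖y‖ ^ 2) ^ (-β) ≤ (κ * (1 + ‖y‖) ^ 2) ^ (-β) := h5
      _ = κ ^ (-β) * (1 + ‖y‖) ^ (-(2 * β)) := by
          rw [Real.mul_rpow hκ.le (by positivity), ← Real.rpow_natCast (1 + ‖y‖) 2,
            ← Real.rpow_mul (by positivity)]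
          norm_num

lemma quad_low (s r N bb : ℝ) (h1 : -(s/2) < r) (h2 : r < s/2) (hb2 : bb ^ 2 ≤ N) :
    s^2/2 + 1/2 * N ≤ N + s^2 + (2 * bb * r + r^2) := by
  nlinarith [sq_nonneg (bb + 2*r),
    mul_pos (by linarith : (0:ℝ) < s/2 - r) (by linarith : (0:ℝ) < s/2 + r)]

set_option maxHeartbeats 1000000 in
/-- **Estimate (2.10)**: Hölder-improved tangential-derivative estimate of the Poisson
semigroup. -/
theorem poisson_tangential_derivative_holder_estimate
    (n : ℕ) (hn : 2 ≤ n) (α : ℝ) (hα : α ∈ Ioo (0 : ℝ) 1) :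
    ∃ C > (0 : ℝ), ∀ g : En (n - 1) → ℝ, Continuous g →
      (∃ B : ℝ, ∀ y : En (n - 1), |g y| ≤ B) →
      ∀ H : ℝ, (∀ a b : En (n - 1), a ≠ b → |g a - g b| ≤ H * ‖a - b‖ ^ α) →
      ∀ s : ℝ, 0 < s → ∀ j : Fin (n - 1), ∀ x : En (n - 1),
        ∃ d : ℝ,
          HasDerivAt (fun r : ℝ =>
            ∫ y : En (n - 1), poissonK n (x + r • eb (n - 1) j - y) s * g y) d 0 ∧
          |d| ≤ C * s ^ (α - 1) * H := by
  obtain ⟨hα0, hα1⟩ := hα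
  have hn0 : (0:ℝ) ≤ (n:ℝ) := Nat.cast_nonneg n
  have hn2 : (2:ℝ) ≤ (n:ℝ) := by exact_mod_cast hn
  have hnc : ((n - 1 : ℕ) : ℝ) = (n : ℝ) - 1 := by
    rw [Nat.cast_sub (by omega : 1 ≤ n), Nat.cast_one]
  set p : ℝ := -(n : ℝ) / 2 with hp
  set cK : ℝ := Real.Gamma ((n : ℝ) / 2) * Real.pi ^ (-(n : ℝ) / 2) with hcK
  have hcKpos : 0 < cK := mul_pos (Real.Gamma_pos_of_pos (by positivity))
    (Real.rpow_pos_of_pos Real.pi_pos _)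
  have hple : p ≤ 0 := by rw [hp]; linarith
  have hp_abs : |p| = (n:ℝ) / 2 := by rw [abs_of_nonpos hple, hp]; ring
  set J : ℝ := ∫ w : En (n-1), ‖w‖ ^ (1 + α) * (1 + ‖w‖ ^ 2) ^ (p - 1) with hJdef
  have hJ0 : 0 ≤ J := integral_nonneg fun w => by positivity
  have hCpos : (0:ℝ) < cK * n * J + 1 := by
    have h1 : 0 ≤ cK * n * J := mul_nonneg (mul_nonneg hcKpos.le hn0) hJ0
    linarith
  refine ⟨cK * n * J + 1, hCpos, ?_⟩
  intro g hg hBex H hH s hs j x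
  obtain ⟨B, hB⟩ := hBex
  have hB0 : 0 ≤ B := (abs_nonneg _).trans (hB 0)
  set e : En (n-1) := eb (n-1) j with he
  have hH0 : 0 ≤ H := by
    have hne : e ≠ 0 := by
      intro h
      have h2 : ‖e‖ = 0 := by rw [h, norm_zero]
      rw [he, eb, EuclideanSpace.norm_single, norm_one] at h2
      exact one_ne_zero h2
    have h1 := hH e 0 hne
    have h3 : ‖e - 0‖ = 1 := by rw [sub_zero, he, eb, EuclideanSpace.norm_single, norm_one]
    rw [h3, Real.one_rpow, mul_one] at h1
    exact (abs_nonneg _).trans h1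
  -- coordinate function and the quadratic polynomial
  set b : En (n-1) → ℝ := fun y => x j - y j with hbdef
  have hproj : Continuous fun y : En (n-1) => y j := (EuclideanSpace.proj j).continuous
  have hbc : Continuous b := by rw [hbdef]; exact continuous_const.sub hproj
  have hb_le : ∀ y : En (n-1), |b y| ≤ ‖x - y‖ := by
    intro y
    have h := abs_coord_le_norm (x - y) j
    have h2 : (x - y) j = b y := rfl
    rwa [h2] at h
  have hb2 : ∀ y : En (n-1), b y ^ 2 ≤ ‖x - y‖ ^ 2 := by
    intro y
    have h1 := hb_le y
    nlinarith [abs_nonneg (b y), norm_nonneg (x - y), sq_abs (b y)]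
  set Q : En (n-1) → ℝ → ℝ := fun y r => ‖x - y‖ ^ 2 + s ^ 2 + (2 * b y * r + r ^ 2)
    with hQdef
  have hQpos : ∀ y r, 0 < Q y r := by
    intro y r
    simp only [hQdef]
    nlinarith [hb2 y, sq_nonneg (b y + r), mul_pos hs hs]
  have hQrcont : ∀ r, Continuous fun y => Q y r := by
    intro r
    simp only [hQdef]
    have h1 : Continuous fun y : En (n-1) => ‖x - y‖ ^ 2 :=
      ((continuous_const.sub continuous_id).norm).pow 2
    exact (h1.add continuous_const).add ((((continuous_const.mul hbc)).mul continuous_const).add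
      continuous_const)
  -- key algebraic identity
  have hkey : ∀ (y : En (n-1)) (r : ℝ), ‖x + r • e - y‖ ^ 2 + s ^ 2 = Q y r := by
    intro y r
    have h1 : x + r • e - y = (x - y) + r • e := by abel
    have h2 : (inner ℝ (x - y) (r • e) : ℝ) = r * b y := by
      rw [real_inner_smul_right]
      congr 1
      rw [he]
      simp only [eb]
      rw [EuclideanSpace.inner_single_right]
      simp [hbdef]
    have h3 : ‖r • e‖ ^ 2 = r ^ 2 := by
      rw [norm_smul, he, eb, EuclideanSpace.norm_single, norm_one, mul_one,
        Real.norm_eq_abs, sq_abs]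
    rw [h1, norm_add_sq_real, h2, h3]
    simp only [hQdef]
    ring
  have hfun : ∀ (y : En (n-1)) (r : ℝ), poissonK n (x + r • e - y) s = cK * s * Q y r ^ p := by
    intro y r
    simp only [poissonK]
    rw [hkey y r, ← hcK, ← hp]
  -- the pointwise derivative
  have hderiv : ∀ (y : En (n-1)) (r : ℝ),
      HasDerivAt (fun r' : ℝ => poissonK n (x + r' • e - y) s * g y)
        (cK * s * ((2 * b y + 2 * r) * p * Q y r ^ (p - 1)) * g y) r := by
    intro y r
    have heq : (fun r' : ℝ => poissonK n (x + r' • e - y) s * g y)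
        = fun r' => cK * s * Q y r' ^ p * g y := by
      funext r'; rw [hfun y r']
    rw [heq]
    have hQd : HasDerivAt (fun r' => Q y r') (2 * b y + 2 * r) r := by
      simp only [hQdef]
      have h1 : HasDerivAt (fun r' : ℝ => 2 * b y * r' + r' ^ 2) (2 * b y + 2 * r) r := by
        have h2 := ((hasDerivAt_id r).const_mul (2 * b y)).add (hasDerivAt_pow 2 r)
        refine h2.congr_deriv ?_
        push_cast; ring
      exact h1.const_add _
    have hpow := hQd.rpow_const (p := p) (Or.inl (hQpos y r).ne')
    exact (hpow.const_mul (cK * s)).mul_const (g y)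
  -- the main absolute-value estimate for the derivative kernel
  have hmain_abs : ∀ (y : En (n-1)) (r : ℝ),
      |(2 * b y + 2 * r) * p * Q y r ^ (p - 1)| ≤ (n:ℝ) * Q y r ^ (p - 1/2) := by
    intro y r
    have hQp := hQpos y r
    have hR1 : (0:ℝ) ≤ Q y r ^ (p - 1) := (Real.rpow_pos_of_pos hQp _).le
    have h2 : |2 * b y + 2 * r| ≤ 2 * Q y r ^ ((1:ℝ)/2) := by
      have hsq : (b y + r) ^ 2 ≤ Q y r := by
        simp only [hQdef]
        nlinarith [hb2 y, sq_nonneg s]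
      have h3 : |b y + r| ≤ Q y r ^ ((1:ℝ)/2) := by
        rw [← Real.sqrt_eq_rpow, ← Real.sqrt_sq_eq_abs]
        exact Real.sqrt_le_sqrt hsq
      calc |2 * b y + 2 * r| = 2 * |b y + r| := by
            rw [show 2 * b y + 2 * r = 2 * (b y + r) from by ring, abs_mul, abs_two]
        _ ≤ 2 * Q y r ^ ((1:ℝ)/2) := by linarith
    calc |(2 * b y + 2 * r) * p * Q y r ^ (p - 1)|
        = |2 * b y + 2 * r| * |p| * Q y r ^ (p - 1) := by
          rw [abs_mul, abs_mul, abs_of_nonneg hR1]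
      _ ≤ (2 * Q y r ^ ((1:ℝ)/2)) * ((n:ℝ)/2) * Q y r ^ (p - 1) := by
          rw [hp_abs]
          apply mul_le_mul_of_nonneg_right _ hR1
          apply mul_le_mul_of_nonneg_right h2 (by positivity)
      _ = (n:ℝ) * (Q y r ^ ((1:ℝ)/2) * Q y r ^ (p - 1)) := by ring
      _ = (n:ℝ) * Q y r ^ (p - 1/2) := by
          rw [← Real.rpow_add hQp, show (1:ℝ)/2 + (p - 1) = p - 1/2 from by ring]
  -- continuity of the derivative integrand
  have hF'cont : ∀ r : ℝ, Continuous fun y : En (n-1) =>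
      cK * s * ((2 * b y + 2 * r) * p * Q y r ^ (p - 1)) * g y := by
    intro r
    refine (continuous_const.mul ?_).mul hg
    refine Continuous.mul ?_ ((hQrcont r).rpow_const fun y => Or.inl (hQpos y r).ne')
    exact (((continuous_const.mul hbc)).add continuous_const).mul continuous_const
  -- integrability of F at r = 0
  have hF_int : Integrable (fun y : En (n-1) => poissonK n (x + (0:ℝ) • e - y) s * g y) := by
    have haux := (integrable_aux (m := n-1) (s^2) 1 ((n:ℝ)/2) (by positivity) one_pos
      (by rw [hnc]; linarith)).comp_sub_left x
    simp only [one_mul] at haux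
    refine (haux.const_mul (cK * s * B)).mono' ?_ (ae_of_all _ fun y => ?_)
    · have : Continuous fun y : En (n-1) => cK * s * Q y 0 ^ p * g y :=
        (continuous_const.mul ((hQrcont 0).rpow_const fun y => Or.inl (hQpos y 0).ne')).mul hg
      refine Continuous.aestronglyMeasurable ?_
      have heq : (fun y : En (n-1) => poissonK n (x + (0:ℝ) • e - y) s * g y)
          = fun y => cK * s * Q y 0 ^ p * g y := by
        funext y; rw [hfun y 0]
      rw [heq]; exact this
    · rw [hfun y 0, Real.norm_eq_abs]
      have hQ0eq : Q y 0 = s^2 + ‖x - y‖^2 := by simp only [hQdef]; ring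
      have hRpos : (0:ℝ) < Q y 0 ^ p := Real.rpow_pos_of_pos (hQpos y 0) _
      have hexp : -((n:ℝ)/2) = p := by rw [hp]; ring
      calc |cK * s * Q y 0 ^ p * g y| = cK * s * Q y 0 ^ p * |g y| := by
            rw [abs_mul, abs_of_nonneg (by positivity)]
        _ ≤ cK * s * Q y 0 ^ p * B := by
            exact mul_le_mul_of_nonneg_left (hB y) (by positivity)
        _ = cK * s * B * (s^2 + ‖x - y‖^2) ^ (-((n:ℝ)/2)) := by
            rw [hexp, hQ0eq]; ring
  -- measurability of F at every r
  have hF_meas : ∀ᶠ r in 𝓝 (0:ℝ), AEStronglyMeasurable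
      (fun y : En (n-1) => poissonK n (x + r • e - y) s * g y) volume := by
    refine Eventually.of_forall fun r => ?_
    have heq : (fun y : En (n-1) => poissonK n (x + r • e - y) s * g y)
        = fun y => cK * s * Q y r ^ p * g y := by
      funext y; rw [hfun y r]
    rw [heq]
    exact ((continuous_const.mul ((hQrcont r).rpow_const fun y =>
      Or.inl (hQpos y r).ne')).mul hg).aestronglyMeasurable
  -- the dominating function
  set G : En (n-1) → ℝ := fun y => cK * s * (n:ℝ) * B * (s^2/2 + 1/2 * ‖x - y‖^2) ^ (p - 1/2)
    with hGdef
  have hexpG : -(((n:ℝ)+1)/2) = p - 1/2 := by rw [hp]; ring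
  have hGint : Integrable G := by
    have haux := (integrable_aux (m := n-1) (s^2/2) (1/2) (((n:ℝ)+1)/2) (by positivity)
      (by norm_num) (by rw [hnc]; linarith)).comp_sub_left x
    have h2 := haux.const_mul (cK * s * (n:ℝ) * B)
    refine h2.congr (ae_of_all _ fun y => ?_)
    simp only [hGdef]
    rw [hexpG]
  have h_bound : ∀ y : En (n-1), ∀ r ∈ ball (0:ℝ) (s/2),
      ‖cK * s * ((2 * b y + 2 * r) * p * Q y r ^ (p - 1)) * g y‖ ≤ G y := by
    intro y r hr
    have hrs : |r| < s/2 := by rwa [mem_ball, Real.dist_eq, sub_zero] at hr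
    have hQlow : s^2/2 + 1/2 * ‖x - y‖^2 ≤ Q y r := by
      simp only [hQdef]
      obtain ⟨h1, h2⟩ := abs_lt.mp hrs
      exact quad_low s r (‖x - y‖^2) (b y) h1 h2 (hb2 y)
    have hmono : Q y r ^ (p - 1/2) ≤ (s^2/2 + 1/2 * ‖x - y‖^2) ^ (p - 1/2) :=
      Real.rpow_le_rpow_of_nonpos (by positivity) hQlow (by rw [hp]; linarith)
    have h3 := hmain_abs y r
    rw [Real.norm_eq_abs, abs_mul, abs_mul, abs_of_nonneg (by positivity : (0:ℝ) ≤ cK * s)]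
    calc cK * s * |(2 * b y + 2 * r) * p * Q y r ^ (p - 1)| * |g y|
        ≤ cK * s * ((n:ℝ) * Q y r ^ (p - 1/2)) * B := by
          have hcs : (0:ℝ) ≤ cK * s := mul_nonneg hcKpos.le hs.le
          have hQRnn : (0:ℝ) ≤ Q y r ^ (p - 1/2) := (Real.rpow_pos_of_pos (hQpos y r) _).le
          apply mul_le_mul _ (hB y) (abs_nonneg _)
            (mul_nonneg hcs (mul_nonneg hn0 hQRnn))
          exact mul_le_mul_of_nonneg_left h3 hcs
      _ ≤ cK * s * ((n:ℝ) * (s^2/2 + 1/2 * ‖x - y‖^2) ^ (p - 1/2)) * B := by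
          apply mul_le_mul_of_nonneg_right _ hB0
          apply mul_le_mul_of_nonneg_left _ (by positivity)
          exact mul_le_mul_of_nonneg_left hmono hn0
      _ = G y := by simp only [hGdef]; ring
  -- differentiation under the integral sign
  obtain ⟨hIF', hHD⟩ := hasDerivAt_integral_of_dominated_loc_of_deriv_le (μ := volume)
    (F := fun r y => poissonK n (x + r • e - y) s * g y)
    (F' := fun r y => cK * s * ((2 * b y + 2 * r) * p * Q y r ^ (p - 1)) * g y)
    (x₀ := (0:ℝ)) (bound := G) (ball_mem_nhds (0:ℝ) (half_pos hs)) hF_meas hF_int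
    ((hF'cont 0).aestronglyMeasurable) (ae_of_all _ h_bound) hGint
    (ae_of_all _ fun y r _ => hderiv y r)
  refine ⟨_, hHD, ?_⟩
  -- now the estimate for d = ∫ F' 0
  set K : En (n-1) → ℝ := fun y => cK * s * ((2 * b y + 2 * 0) * p * Q y 0 ^ (p - 1))
    with hKdef
  have hQ0eq : ∀ y : En (n-1), Q y 0 = s^2 + ‖x - y‖^2 := by
    intro y; simp only [hQdef]; ring
  have hKcont : Continuous K := by
    rw [hKdef]
    refine continuous_const.mul ?_
    refine Continuous.mul ?_ ((hQrcont 0).rpow_const fun y => Or.inl (hQpos y 0).ne')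
    exact (((continuous_const.mul hbc)).add continuous_const).mul continuous_const
  have hKint : Integrable K := by
    have haux := (integrable_aux (m := n-1) (s^2) 1 (((n:ℝ)+1)/2) (by positivity) one_pos
      (by rw [hnc]; linarith)).comp_sub_left x
    simp only [one_mul] at haux
    refine (haux.const_mul (cK * s * (n:ℝ))).mono' hKcont.aestronglyMeasurable
      (ae_of_all _ fun y => ?_)
    have h3 := hmain_abs y 0
    rw [Real.norm_eq_abs]
    calc |K y| = cK * s * |(2 * b y + 2 * 0) * p * Q y 0 ^ (p - 1)| := by
          simp only [hKdef]
          rw [abs_mul, abs_of_nonneg (by positivity : (0:ℝ) ≤ cK * s)]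
      _ ≤ cK * s * ((n:ℝ) * Q y 0 ^ (p - 1/2)) := by
          exact mul_le_mul_of_nonneg_left h3 (by positivity)
      _ = cK * s * (n:ℝ) * ((s^2 + ‖x - y‖^2) ^ (-(((n:ℝ)+1)/2))) := by
          rw [hexpG, hQ0eq y]; ring
  -- the kernel K has zero integral (oddness)
  have hKzero : (∫ y, K y) = 0 := by
    set φ : En (n-1) → ℝ := fun z => cK * s * ((2 * (x j - (x j - z j)) + 2 * 0) * p *
      (‖z‖ ^ 2 + s ^ 2 + (2 * (x j - (x j - z j)) * 0 + 0 ^ 2)) ^ (p - 1)) with hφdef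
    have hKφ : ∀ y : En (n-1), K y = φ (x - y) := by
      intro y
      simp only [hKdef, hφdef, hQdef, hbdef]
      norm_num
    have hφodd : ∀ z : En (n-1), φ (-z) = -φ z := by
      intro z
      have hz : (-z) j = -(z j) := rfl
      simp only [hφdef, hz, norm_neg]
      ring
    have h1 : (∫ y, K y) = ∫ z, φ z := by
      rw [show (fun y : En (n-1) => K y) = fun y => φ (x - y) from funext hKφ]
      exact integral_sub_left_eq_self φ volume x
    have h2 : (∫ z, φ z) = - ∫ z, φ z := by
      conv_lhs => rw [← integral_neg_eq_self φ volume]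
      simp only [hφodd]
      exact integral_neg φ
    rw [h1]
    linarith [h2]
  -- d equals the integral against g y - g x
  have hsplit : (∫ y, cK * s * ((2 * b y + 2 * 0) * p * Q y 0 ^ (p - 1)) * g y)
      = ∫ y, K y * (g y - g x) := by
    have h1 : Integrable (fun y : En (n-1) => K y * g y) := by
      have h2 := hIF'
      have heq : (fun y : En (n-1) => cK * s * ((2 * b y + 2 * 0) * p * Q y 0 ^ (p - 1)) * g y)
          = fun y => K y * g y := by
        funext y; simp only [hKdef]
      rwa [heq] at h2
    have h2 : Integrable (fun y : En (n-1) => K y * g x) := hKint.mul_const _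
    have heq : (fun y : En (n-1) => K y * (g y - g x)) = fun y => K y * g y - K y * g x := by
      funext y; ring
    have heq2 : (fun y : En (n-1) => cK * s * ((2 * b y + 2 * 0) * p * Q y 0 ^ (p - 1)) * g y)
        = fun y => K y * g y := by
      funext y; simp only [hKdef]
    rw [heq2, heq, integral_sub h1 h2, integral_mul_const, hKzero, zero_mul, sub_zero]
  -- pointwise bound for the integrand
  set Φ : En (n-1) → ℝ := fun z => ‖z‖ ^ (1 + α) * (s^2 + ‖z‖^2) ^ (p - 1) with hΦdef
  have hΦcont : Continuous Φ := by
    rw [hΦdef]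
    refine Continuous.mul (continuous_norm.rpow_const fun z => Or.inr (by linarith)) ?_
    exact (continuous_const.add (continuous_norm.pow 2)).rpow_const
      fun z => Or.inl (by simp only [Pi.add_apply, Pi.pow_apply]; positivity)
  have hΦint : Integrable Φ := by
    have haux := integrable_aux (m := n-1) (s^2) 1 (((n:ℝ)+1-α)/2) (by positivity) one_pos
      (by rw [hnc]; linarith)
    simp only [one_mul] at haux
    refine haux.mono' hΦcont.aestronglyMeasurable (ae_of_all _ fun z => ?_)
    rw [Real.norm_eq_abs, abs_of_nonneg (by rw [hΦdef]; positivity)]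
    simp only [hΦdef]
    have h1 : ‖z‖ ^ (1 + α) ≤ (s^2 + ‖z‖^2) ^ ((1+α)/2) := by
      have h2 : ‖z‖ = (‖z‖^2) ^ ((1:ℝ)/2) := by
        rw [← Real.rpow_natCast ‖z‖ 2, ← Real.rpow_mul (norm_nonneg z)]
        norm_num
      calc ‖z‖ ^ (1 + α) = ((‖z‖^2) ^ ((1:ℝ)/2)) ^ (1+α) := by rw [← h2]
        _ = (‖z‖^2) ^ ((1+α)/2) := by
            rw [← Real.rpow_mul (sq_nonneg _), show (1:ℝ)/2 * (1+α) = (1+α)/2 from by ring]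
        _ ≤ (s^2 + ‖z‖^2) ^ ((1+α)/2) := by
            apply Real.rpow_le_rpow (sq_nonneg _) (by nlinarith [sq_nonneg s]) (by linarith)
    calc ‖z‖ ^ (1 + α) * (s^2 + ‖z‖^2) ^ (p - 1)
        ≤ (s^2 + ‖z‖^2) ^ ((1+α)/2) * (s^2 + ‖z‖^2) ^ (p - 1) := by
          exact mul_le_mul_of_nonneg_right h1 (Real.rpow_nonneg (by positivity) _)
      _ = (s^2 + ‖z‖^2) ^ ((1+α)/2 + (p - 1)) := by
          rw [← Real.rpow_add (by positivity)]
      _ = (s^2 + ‖z‖^2) ^ (-(((n:ℝ)+1-α)/2)) := by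
          rw [show (1+α)/2 + (p - 1) = -(((n:ℝ)+1-α)/2) from by rw [hp]; ring]
  have hbound2 : ∀ y : En (n-1), |K y * (g y - g x)| ≤ cK * s * (n:ℝ) * H * Φ (x - y) := by
    intro y
    rcases eq_or_ne y x with rfl | hyx
    · simp only [sub_self, mul_zero, abs_zero]
      exact mul_nonneg (mul_nonneg (by positivity) hH0) (by rw [hΦdef]; positivity)
    · have hnpos : (0:ℝ) < ‖x - y‖ := by
        rw [norm_sub_pos_iff]
        exact fun h => hyx (h.symm)
      have hg' : |g y - g x| ≤ H * ‖x - y‖ ^ α := by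
        have h := hH y x hyx
        rwa [norm_sub_rev] at h
      have hQp0 := hQpos y 0
      have hR0 : (0:ℝ) ≤ Q y 0 ^ (p - 1) := (Real.rpow_pos_of_pos hQp0 _).le
      have e1 : |K y| = cK * s * (n:ℝ) * (|b y| * Q y 0 ^ (p - 1)) := by
        simp only [hKdef, mul_zero, add_zero]
        simp only [abs_mul]
        rw [abs_of_nonneg hcKpos.le, abs_of_nonneg hs.le, abs_two, hp_abs,
          abs_of_nonneg hR0]
        ring
      have hKb : |K y| ≤ cK * s * (n:ℝ) * (‖x - y‖ * (s^2 + ‖x - y‖^2) ^ (p - 1)) := by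
        rw [e1, hQ0eq y]
        apply mul_le_mul_of_nonneg_left _ (by positivity)
        exact mul_le_mul_of_nonneg_right (hb_le y)
          (Real.rpow_nonneg (by positivity) _)
      calc |K y * (g y - g x)| = |K y| * |g y - g x| := abs_mul _ _
        _ ≤ (cK * s * (n:ℝ) * (‖x - y‖ * (s^2 + ‖x - y‖^2) ^ (p - 1))) * (H * ‖x - y‖ ^ α) := by
            apply mul_le_mul hKb hg' (abs_nonneg _) (by positivity)
        _ = cK * s * (n:ℝ) * H * Φ (x - y) := by
            simp only [hΦdef]
            rw [show ‖x - y‖ ^ (1 + α) = ‖x - y‖ * ‖x - y‖ ^ α from by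
              rw [Real.rpow_add hnpos, Real.rpow_one]]
            ring
  -- the scaling identity
  have hΦsmul : ∀ z : En (n-1), Φ (s • z)
      = (s ^ (1+α) * (s^2) ^ (p-1)) * (‖z‖ ^ (1 + α) * (1 + ‖z‖ ^ 2) ^ (p - 1)) := by
    intro z
    simp only [hΦdef]
    rw [norm_smul, Real.norm_eq_abs, abs_of_pos hs,
      Real.mul_rpow hs.le (norm_nonneg z),
      show s^2 + (s * ‖z‖)^2 = s^2 * (1 + ‖z‖^2) from by ring,
      Real.mul_rpow (by positivity) (by positivity)]
    ring
  have hB1 : ∫ z, Φ (s • z) = (s ^ (n-1))⁻¹ * ∫ z, Φ z := by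
    rw [MeasureTheory.Measure.integral_comp_smul volume Φ s, finrank_euclideanSpace_fin,
      smul_eq_mul, abs_of_nonneg (by positivity)]
  have hEqB : (∫ z, Φ z) = s ^ (n-1) * ∫ z, Φ (s • z) := by
    rw [hB1]
    field_simp
  have hEqC : (∫ z, Φ (s • z)) = (s ^ (1+α) * (s^2) ^ (p-1)) * J := by
    calc (∫ z, Φ (s • z))
        = ∫ z, (s ^ (1+α) * (s^2) ^ (p-1)) * (‖z‖ ^ (1 + α) * (1 + ‖z‖ ^ 2) ^ (p - 1)) := by
          congr 1; funext z; exact hΦsmul z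
      _ = (s ^ (1+α) * (s^2) ^ (p-1)) * ∫ z, ‖z‖ ^ (1 + α) * (1 + ‖z‖ ^ 2) ^ (p - 1) :=
          integral_const_mul _ _
      _ = (s ^ (1+α) * (s^2) ^ (p-1)) * J := by rw [← hJdef]
  have hspow : s * s ^ (n-1) * s ^ (1+α) * (s^2) ^ (p-1) = s ^ (α - 1) := by
    have h1 : s * s ^ (n-1) = s ^ n := by
      rw [← pow_succ']
      congr 1
      omega
    rw [h1, ← Real.rpow_natCast s n, ← Real.rpow_natCast s 2, ← Real.rpow_mul hs.le,
      ← Real.rpow_add hs, ← Real.rpow_add hs]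
    congr 1
    rw [hp]
    push_cast
    ring
  -- final estimate
  have hmaj : |∫ y, K y * (g y - g x)| ≤ ∫ y, cK * s * (n:ℝ) * H * Φ (x - y) := by
    have hint : Integrable (fun y : En (n-1) => cK * s * (n:ℝ) * H * Φ (x - y)) :=
      (hΦint.comp_sub_left x).const_mul _
    have h := norm_integral_le_of_norm_le hint (ae_of_all _ fun y => by
      rw [Real.norm_eq_abs]; exact hbound2 y)
    rwa [Real.norm_eq_abs] at h
  rw [hsplit]
  calc |∫ y, K y * (g y - g x)| ≤ ∫ y, cK * s * (n:ℝ) * H * Φ (x - y) := hmaj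
    _ = cK * s * (n:ℝ) * H * ∫ y, Φ (x - y) := integral_const_mul _ _
    _ = cK * s * (n:ℝ) * H * ∫ z, Φ z := by rw [integral_sub_left_eq_self Φ volume x]
    _ = cK * s * (n:ℝ) * H * (s ^ (n-1) * ((s ^ (1+α) * (s^2) ^ (p-1)) * J)) := by
        rw [hEqB, hEqC]
    _ = (cK * (n:ℝ) * J) * s ^ (α - 1) * H := by rw [← hspow]; ring
    _ ≤ (cK * (n:ℝ) * J + 1) * s ^ (α - 1) * H := by
        have h0 : 0 ≤ s ^ (α - 1) * H := mul_nonneg (Real.rpow_nonneg hs.le _) hH0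
        nlinarith
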